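/- Consider the second-order system ẋ₁ = x₂, ẋ₂ = f(x₁,x₂,t) + u(t) on [0,∞), a reference transient r(t) with r(0) = x₁(0), ṙ(0) = x₂(0), and the reduced-order extended state observer ξ̇ = −ω_o ξ − ω_o² x₂ − ω_o u with ξ(0) = −ω_o x₂(0) and output f̂ = ξ + ω_o x₂, driven by the control u = −k_ap(x₁ − r) − k_ad(x₂ − ṙ) − f̂ + r̈. Then for all t ≥ 0 the observer output admits the representation f̂(t) = ω_o k_ad (x₁(t) − r(t)) + ω_o (x₂(t) − ṙ(t)) + ω_o k_ap ∫₀ᵗ (x₁(τ) − r(τ)) dτ. -/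

import Mathlib

open Real Set intervalIntegral

/-- **ESO output representation.**
For the second-order system `ẋ₁ = x₂`, `ẋ₂ = f + u`, with reference transient `r`
(`r(0) = x₁(0)`, `ṙ(0) = x₂(0)`), the reduced-order extended state observer
`ξ̇ = −ω_o ξ − ω_o² x₂ − ω_o u`, `ξ(0) = −ω_o x₂(0)`, `f̂ = ξ + ω_o x₂`,
driven by the ADRC control `u = −k_ap(x₁−r) − k_ad(x₂−ṙ) − f̂ + r̈`, satisfies for all `t ≥ 0`:
`f̂(t) = ω_o k_ad (x₁−r) + ω_o (x₂−ṙ) + ω_o k_ap ∫₀ᵗ (x₁−r)`. -/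
theorem eso_output_representation
    (x1 x2 ξ r r' r'' u fhat : ℝ → ℝ) (ωo kap kad : ℝ)
    (hx1 : ∀ t ≥ (0:ℝ), HasDerivAt x1 (x2 t) t)
    (hr : ∀ t ≥ (0:ℝ), HasDerivAt r (r' t) t)
    (hr' : ∀ t ≥ (0:ℝ), HasDerivAt r' (r'' t) t)
    (hr0 : r 0 = x1 0) (hr'0 : r' 0 = x2 0)
    (hu : ∀ t ≥ (0:ℝ), u t = -kap * (x1 t - r t) - kad * (x2 t - r' t) - fhat t + r'' t)
    (hξ : ∀ t ≥ (0:ℝ), HasDerivAt ξ (-ωo * ξ t - ωo ^ 2 * x2 t - ωo * u t) t)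
    (hξ0 : ξ 0 = -ωo * x2 0)
    (hfhat : ∀ t ≥ (0:ℝ), fhat t = ξ t + ωo * x2 t) :
    ∀ t ≥ (0:ℝ),
      fhat t = ωo * kad * (x1 t - r t) + ωo * (x2 t - r' t)
        + ωo * kap * ∫ τ in (0:ℝ)..t, (x1 τ - r τ) := by
  intro t ht
  set e : ℝ → ℝ := fun τ => x1 τ - r τ with he_def
  have he_cont : ContinuousOn e (Ici (0:ℝ)) := fun s hs =>
    (((hx1 s hs).continuousAt.sub (hr s hs).continuousAt)).continuousWithinAt
  have hInt : ∀ s ≥ (0:ℝ), IntervalIntegrable e MeasureTheory.volume 0 s := by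
    intro s hs
    apply ContinuousOn.intervalIntegrable
    rw [uIcc_of_le hs]
    exact he_cont.mono (Icc_subset_Ici_self)
  set G : ℝ → ℝ := fun s =>
    ξ s + ωo * r' s - ωo * kad * (x1 s - r s) - ωo * kap * ∫ τ in (0:ℝ)..s, e τ
    with hG_def
  have hGderiv : ∀ x ∈ Ico (0:ℝ) t, HasDerivWithinAt G 0 (Ici x) x := by
    intro x hx
    have hx0 : (0:ℝ) ≤ x := hx.1
    have hmeas : StronglyMeasurableAtFilter e (nhdsWithin x (Ioi x)) MeasureTheory.volume :=
      (he_cont.mono (fun y hy => le_trans hx0 (le_of_lt hy))).stronglyMeasurableAtFilter_nhdsWithin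
        measurableSet_Ioi x
    have hIder : HasDerivWithinAt (fun s => ∫ τ in (0:ℝ)..s, e τ) (e x) (Ici x) x :=
      intervalIntegral.integral_hasDerivWithinAt_right (hInt x hx0) hmeas
        (((hx1 x hx0).continuousAt.sub (hr x hx0).continuousAt).continuousWithinAt)
    have hderiv := (((hξ x hx0).hasDerivWithinAt.add
        ((hr' x hx0).hasDerivWithinAt.const_mul ωo)).sub
        (((hx1 x hx0).hasDerivWithinAt.sub (hr x hx0).hasDerivWithinAt).const_mul (ωo * kad))).sub
        (hIder.const_mul (ωo * kap))
    refine hderiv.congr_deriv ?_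
    have hux := hu x hx0
    have hfx := hfhat x hx0
    rw [hux, hfx]
    simp only [he_def]
    ring
  have hGcont : ContinuousOn G (Icc 0 t) := by
    apply ContinuousOn.sub
    apply ContinuousOn.sub
    · exact ContinuousOn.add
        (fun s hs => (hξ s hs.1).continuousAt.continuousWithinAt)
        (continuousOn_const.mul (fun s hs => (hr' s hs.1).continuousAt.continuousWithinAt))
    · exact continuousOn_const.mul (fun s hs =>
        ((hx1 s hs.1).continuousAt.sub (hr s hs.1).continuousAt).continuousWithinAt)
    · exact continuousOn_const.mul
        ((intervalIntegral.continuousOn_primitive_interval' (hInt t ht)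
          (by rw [uIcc_of_le ht]; exact left_mem_Icc.mpr ht)).mono
          (by rw [uIcc_of_le ht]))
  have hGt : G t = G 0 :=
    constant_of_has_deriv_right_zero hGcont hGderiv t (right_mem_Icc.mpr ht)
  have hG0 : G 0 = 0 := by
    simp only [hG_def, intervalIntegral.integral_same, hξ0, hr'0, hr0]
    ring
  have hft := hfhat t ht
  have : ξ t + ωo * r' t - ωo * kad * (x1 t - r t)
      - ωo * kap * ∫ τ in (0:ℝ)..t, e τ = 0 := hGt.trans hG0
  simp only [he_def] at this
  rw [hft]
  linarith
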